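/- For the Catalan numbers C, for every n ≥ 2 there exists j with (n-1)/3 ≤ j ≤ (2n+1)/3 such that C(n) ≤ 2·n²·C(j)·C(n-j). -/

import Mathlib

lemma cb_split (n j : ℕ) (hj : j ≤ n) :
    Nat.centralBinom n ≤ (n + 1) * (Nat.centralBinom j * Nat.centralBinom (n - j)) := by
  have h2 : 2 * n = 2 * j + 2 * (n - j) := by omega
  rw [Nat.centralBinom, h2, Nat.add_choose_eq]
  calc ∑ ij ∈ Finset.HasAntidiagonal.antidiagonal n, (2 * j).choose ij.1 * (2 * (n - j)).choose ij.2
      ≤ ∑ _ij ∈ Finset.HasAntidiagonal.antidiagonal n,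
          Nat.centralBinom j * Nat.centralBinom (n - j) := by
        apply Finset.sum_le_sum
        intro ij _
        apply Nat.mul_le_mul
        · refine (Nat.choose_le_middle _ _).trans_eq ?_
          rw [Nat.centralBinom]
          congr 1
          omega
        · refine (Nat.choose_le_middle _ _).trans_eq ?_
          rw [Nat.centralBinom]
          congr 1
          omega
    _ = (n + 1) * (Nat.centralBinom j * Nat.centralBinom (n - j)) := by
        rw [Finset.sum_const, Finset.Nat.card_antidiagonal, smul_eq_mul]

theorem stmt_13 : ∀ n : ℕ, 2 ≤ n → ∃ j : ℕ,
    ((n : ℝ) - 1) / 3 ≤ (j : ℝ) ∧ (j : ℝ) ≤ (2 * (n : ℝ) + 1) / 3 ∧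
    catalan n ≤ 2 * n ^ 2 * catalan j * catalan (n - j) := by
  intro n hn
  set j := (n + 1) / 2 with hjdef
  have hj1 : n ≤ 2 * j := by omega
  have hj2 : 2 * j ≤ n + 1 := by omega
  have hjn : j ≤ n := by omega
  refine ⟨j, ?_, ?_, ?_⟩
  · have : (n : ℝ) ≤ 2 * j := by exact_mod_cast hj1
    linarith
  · have h : (2 * j : ℝ) ≤ n + 1 := by exact_mod_cast hj2
    have hn' : (2 : ℝ) ≤ n := by exact_mod_cast hn
    linarith
  · -- main inequality
    have key := cb_split n j hjn
    have h1 : (n + 1) * catalan n = Nat.centralBinom n := succ_mul_catalan_eq_centralBinom n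
    have h2 : (j + 1) * catalan j = Nat.centralBinom j := succ_mul_catalan_eq_centralBinom j
    have h3 : (n - j + 1) * catalan (n - j) = Nat.centralBinom (n - j) :=
      succ_mul_catalan_eq_centralBinom (n - j)
    have hmid : catalan n ≤ (j + 1) * (n - j + 1) * (catalan j * catalan (n - j)) := by
      have := key
      rw [← h1, ← h2, ← h3] at this
      have h4 : (n + 1) * catalan n ≤
          (n + 1) * ((j + 1) * (n - j + 1) * (catalan j * catalan (n - j))) := by
        calc (n + 1) * catalan n ≤ (n + 1) * ((j + 1) * catalan j * ((n - j + 1) * catalan (n - j))) := this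
          _ = (n + 1) * ((j + 1) * (n - j + 1) * (catalan j * catalan (n - j))) := by ring
      exact Nat.le_of_mul_le_mul_left h4 (by omega)
    have hcoef : (j + 1) * (n - j + 1) ≤ 2 * n ^ 2 := by
      have h5 : n - j ≤ n := Nat.sub_le n j
      nlinarith [Nat.sub_add_cancel hjn]
    calc catalan n ≤ (j + 1) * (n - j + 1) * (catalan j * catalan (n - j)) := hmid
      _ ≤ 2 * n ^ 2 * (catalan j * catalan (n - j)) :=
        Nat.mul_le_mul_right _ hcoef
      _ = 2 * n ^ 2 * catalan j * catalan (n - j) := by ring
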